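/- arXiv:2007.00766 — 4 statements merged into one kernel-verified Lean document; each statement's English description precedes it below -/
import Mathlib

section
/- For the radial eigenfunctions e_n(r) = √2 sin(nπr)/r on the unit ball of ℝ³ and any p > 3, one has ‖e_n‖_{L^p(Θ)} ≲ n^{1 − 3/p}, where the L^p norm is taken with respect to the measure r² dr on (0,1] (up to angular normalization), with implicit constant depending only on p. -/
open MeasureTheory

/-- `‖e_n‖_{L^p(Θ)} ≲ n^{1 - 3/p}` for `p > 3`, where `e_n(r) = √2 sin(nπr)/r`
and the norm is taken with respect to the radial measure `r² dr` on `(0,1]`. -/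
theorem eigenfunction_Lp_bound_large_p (p : ℝ) (hp : 3 < p) (e : ℕ → ℝ → ℝ)
    (he : ∀ n r, e n r = Real.sqrt 2 * Real.sin (n * Real.pi * r) / r) :
    ∃ C > (0:ℝ), ∀ n : ℕ, 1 ≤ n →
      (∫ r in (0:ℝ)..1, |e n r| ^ p * r ^ 2) ^ (1 / p) ≤ C * (n : ℝ) ^ (1 - 3 / p) := by
  have hp0 : (0:ℝ) < p := by linarith
  have hπ : (0:ℝ) < Real.pi := Real.pi_pos
  have hs2 : (0:ℝ) < Real.sqrt 2 := Real.sqrt_pos.mpr (by norm_num)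
  have hsp : (0:ℝ) < Real.sqrt 2 ^ p := Real.rpow_pos_of_pos hs2 p
  have hπp : (0:ℝ) < Real.pi ^ p := Real.rpow_pos_of_pos hπ p
  set K : ℝ := Real.sqrt 2 ^ p * Real.pi ^ p / 3 + Real.sqrt 2 ^ p / (p - 3) with hKdef
  have hK : 0 < K := by
    have h1 : 0 < Real.sqrt 2 ^ p * Real.pi ^ p / 3 := by positivity
    have h2 : 0 < Real.sqrt 2 ^ p / (p - 3) := div_pos hsp (by linarith)
    rw [hKdef]
    linarith
  refine ⟨K ^ (1/p), Real.rpow_pos_of_pos hK _, ?_⟩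
  intro n hn
  have hn0 : (0:ℝ) < n := by exact_mod_cast Nat.pos_of_ne_zero (by omega)
  have hn1 : (1:ℝ) ≤ n := by exact_mod_cast hn
  set a : ℝ := 1/(n:ℝ) with ha
  have ha0 : 0 < a := by positivity
  have ha1 : a ≤ 1 := by rw [ha, div_le_one hn0]; exact hn1
  set T : ℝ := (n:ℝ) ^ (p - 3) with hT
  have hT0 : 0 < T := Real.rpow_pos_of_pos hn0 _
  have hT1 : (1:ℝ) ≤ T := Real.one_le_rpow hn1 (by linarith)
  set M : ℝ := (Real.sqrt 2 * ((n:ℝ) * Real.pi)) ^ p with hM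
  have hM0 : 0 < M := Real.rpow_pos_of_pos (by positivity) _
  -- pointwise bound 1 : |e n r| ≤ √2 * (n π)
  have hb1 : ∀ r : ℝ, |e n r| ≤ Real.sqrt 2 * ((n:ℝ) * Real.pi) := by
    intro r
    rw [he]
    rcases eq_or_ne r 0 with h | h
    · simp [h]
      positivity
    · rw [abs_div, abs_mul, abs_of_nonneg (Real.sqrt_nonneg 2),
        div_le_iff₀ (abs_pos.mpr h)]
      calc Real.sqrt 2 * |Real.sin ((n:ℝ) * Real.pi * r)|
          ≤ Real.sqrt 2 * |(n:ℝ) * Real.pi * r| :=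
            mul_le_mul_of_nonneg_left Real.abs_sin_le_abs (Real.sqrt_nonneg 2)
        _ = Real.sqrt 2 * ((n:ℝ) * Real.pi) * |r| := by
            rw [abs_mul, abs_of_nonneg (by positivity : (0:ℝ) ≤ (n:ℝ) * Real.pi)]
            ring
  -- measurability of the integrand
  have hmeas : Measurable fun r : ℝ => |e n r| ^ p * r ^ 2 := by
    have hefun : (fun r : ℝ => |e n r| ^ p * r ^ 2)
        = fun r : ℝ => |Real.sqrt 2 * Real.sin ((n:ℝ) * Real.pi * r) / r| ^ p * r ^ 2 := by
      funext r; rw [he]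
    rw [hefun]
    fun_prop
  -- integrability on [0,1]
  have hIntg : IntervalIntegrable (fun r : ℝ => |e n r| ^ p * r ^ 2) volume 0 1 := by
    refine (intervalIntegrable_const (c := M)).mono_fun hmeas.aestronglyMeasurable ?_
    filter_upwards [MeasureTheory.ae_restrict_mem measurableSet_uIoc] with x hx
    rw [Set.uIoc_of_le zero_le_one] at hx
    have hx2 : x ^ 2 ≤ 1 := by nlinarith [hx.1, hx.2]
    have h1 : |e n x| ^ p ≤ M := Real.rpow_le_rpow (abs_nonneg _) (hb1 x) hp0.le
    have h0 : (0:ℝ) ≤ |e n x| ^ p := Real.rpow_nonneg (abs_nonneg _) p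
    simp only [Real.norm_eq_abs]
    rw [abs_of_nonneg (by positivity), abs_of_nonneg hM0.le]
    calc |e n x| ^ p * x ^ 2 ≤ M * 1 := by
          apply mul_le_mul h1 hx2 (sq_nonneg x) hM0.le
      _ = M := mul_one M
  have hsub1 : Set.uIcc (0:ℝ) a ⊆ Set.uIcc (0:ℝ) 1 := by
    rw [Set.uIcc_of_le ha0.le, Set.uIcc_of_le zero_le_one]
    exact Set.Icc_subset_Icc le_rfl ha1
  have hsub2 : Set.uIcc a (1:ℝ) ⊆ Set.uIcc (0:ℝ) 1 := by
    rw [Set.uIcc_of_le ha1, Set.uIcc_of_le zero_le_one]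
    exact Set.Icc_subset_Icc ha0.le le_rfl
  have hIntg1 := hIntg.mono_set hsub1
  have hIntg2 := hIntg.mono_set hsub2
  -- split the integral
  have hsplit : (∫ r in (0:ℝ)..1, |e n r| ^ p * r ^ 2)
      = (∫ r in (0:ℝ)..a, |e n r| ^ p * r ^ 2) + ∫ r in a..(1:ℝ), |e n r| ^ p * r ^ 2 :=
    (intervalIntegral.integral_add_adjacent_intervals hIntg1 hIntg2).symm
  -- first piece
  have hI1 : (∫ r in (0:ℝ)..a, |e n r| ^ p * r ^ 2) ≤ M * (a ^ 3 / 3) := by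
    have hmono : (∫ r in (0:ℝ)..a, |e n r| ^ p * r ^ 2) ≤ ∫ r in (0:ℝ)..a, M * r ^ 2 := by
      refine intervalIntegral.integral_mono_on ha0.le hIntg1
        (Continuous.intervalIntegrable (by continuity) 0 a) ?_
      intro x hx
      have h1 : |e n x| ^ p ≤ M := Real.rpow_le_rpow (abs_nonneg _) (hb1 x) hp0.le
      exact mul_le_mul_of_nonneg_right h1 (sq_nonneg x)
    have hval : (∫ r in (0:ℝ)..a, M * r ^ 2) = M * (a ^ 3 / 3) := by
      rw [intervalIntegral.integral_const_mul, integral_pow]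
      norm_num
    linarith [hmono, hval.le]
  -- second piece
  have hI2 : (∫ r in a..(1:ℝ), |e n r| ^ p * r ^ 2) ≤ Real.sqrt 2 ^ p / (p - 3) * T := by
    have hmono : (∫ r in a..(1:ℝ), |e n r| ^ p * r ^ 2)
        ≤ ∫ r in a..(1:ℝ), Real.sqrt 2 ^ p * r ^ (2 - p) := by
      refine intervalIntegral.integral_mono_on ha1 hIntg2 ?_ ?_
      · exact (intervalIntegral.intervalIntegrable_rpow
          (Or.inr (Set.notMem_uIcc_of_lt ha0 one_pos))).const_mul _
      · intro x hx
        have hx0 : 0 < x := lt_of_lt_of_le ha0 hx.1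
        have hb2 : |e n x| ≤ Real.sqrt 2 / x := by
          rw [he, abs_div, abs_mul, abs_of_nonneg (Real.sqrt_nonneg 2),
            abs_of_pos hx0]
          rw [div_le_div_iff_of_pos_right hx0]
          nlinarith [Real.abs_sin_le_one ((n:ℝ) * Real.pi * x), hs2.le,
            abs_nonneg (Real.sin ((n:ℝ) * Real.pi * x))]
        have h1 : |e n x| ^ p ≤ (Real.sqrt 2 / x) ^ p :=
          Real.rpow_le_rpow (abs_nonneg _) hb2 hp0.le
        have h2 : (Real.sqrt 2 / x) ^ p * x ^ 2 = Real.sqrt 2 ^ p * x ^ (2 - p) := by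
          rw [Real.div_rpow (Real.sqrt_nonneg 2) hx0.le, Real.rpow_sub hx0,
            show (x:ℝ) ^ (2:ℕ) = x ^ ((2:ℕ):ℝ) from (Real.rpow_natCast x 2).symm]
          push_cast
          ring
        calc |e n x| ^ p * x ^ 2 ≤ (Real.sqrt 2 / x) ^ p * x ^ 2 :=
              mul_le_mul_of_nonneg_right h1 (sq_nonneg x)
          _ = Real.sqrt 2 ^ p * x ^ (2 - p) := h2
    have haval : a ^ (2 - p + 1) = T := by
      rw [ha, one_div, Real.inv_rpow hn0.le, ← Real.rpow_neg hn0.le, hT]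
      congr 1
      ring
    have hval : (∫ r in a..(1:ℝ), Real.sqrt 2 ^ p * r ^ (2 - p))
        = Real.sqrt 2 ^ p * ((1 - T) / (2 - p + 1)) := by
      rw [intervalIntegral.integral_const_mul, integral_rpow
        (Or.inr ⟨by intro h; linarith, Set.notMem_uIcc_of_lt ha0 one_pos⟩),
        Real.one_rpow, haval]
    have hineq : Real.sqrt 2 ^ p * ((1 - T) / (2 - p + 1)) ≤ Real.sqrt 2 ^ p / (p - 3) * T := by
      have h3 : (1 - T) / (2 - p + 1) = (T - 1) / (p - 3) := by
        rw [show (2 - p + 1 : ℝ) = -(p - 3) by ring, div_neg]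
        ring
      rw [h3]
      have h4 : (T - 1) / (p - 3) ≤ T / (p - 3) :=
        (div_le_div_iff_of_pos_right (by linarith : (0:ℝ) < p - 3)).mpr (by linarith)
      calc Real.sqrt 2 ^ p * ((T - 1) / (p - 3)) ≤ Real.sqrt 2 ^ p * (T / (p - 3)) :=
            mul_le_mul_of_nonneg_left h4 hsp.le
        _ = Real.sqrt 2 ^ p / (p - 3) * T := by ring
    calc (∫ r in a..(1:ℝ), |e n r| ^ p * r ^ 2)
        ≤ ∫ r in a..(1:ℝ), Real.sqrt 2 ^ p * r ^ (2 - p) := hmono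
      _ = Real.sqrt 2 ^ p * ((1 - T) / (2 - p + 1)) := hval
      _ ≤ Real.sqrt 2 ^ p / (p - 3) * T := hineq
  -- first piece value in terms of T
  have key1 : M * (a ^ 3 / 3) = Real.sqrt 2 ^ p * Real.pi ^ p / 3 * T := by
    have hMeq : M = Real.sqrt 2 ^ p * (n:ℝ) ^ p * Real.pi ^ p := by
      rw [hM, Real.mul_rpow (Real.sqrt_nonneg 2) (by positivity),
        Real.mul_rpow hn0.le Real.pi_pos.le]
      ring
    have haeq : a ^ 3 = ((n:ℝ) ^ (3:ℝ))⁻¹ := by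
      rw [ha, div_pow, one_pow, ← Real.rpow_natCast (n:ℝ) 3]
      norm_num
    have hnp : (n:ℝ) ^ p * ((n:ℝ) ^ (3:ℝ))⁻¹ = T := by
      rw [hT, Real.rpow_sub hn0, div_eq_mul_inv]
    rw [hMeq, haeq, ← hnp]
    ring
  -- total
  have htot : (∫ r in (0:ℝ)..1, |e n r| ^ p * r ^ 2) ≤ K * T := by
    rw [hsplit, hKdef]
    have := hI1
    rw [key1] at this
    nlinarith [this, hI2]
  have hint0 : (0:ℝ) ≤ ∫ r in (0:ℝ)..1, |e n r| ^ p * r ^ 2 := by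
    apply intervalIntegral.integral_nonneg zero_le_one
    intro u hu
    positivity
  have hfinal : ((∫ r in (0:ℝ)..1, |e n r| ^ p * r ^ 2)) ^ (1/p) ≤ (K * T) ^ (1/p) :=
    Real.rpow_le_rpow hint0 htot (by positivity)
  have hexp : (p - 3) * (1/p) = 1 - 3/p := by
    field_simp
  have hKT : (K * T) ^ (1/p) = K ^ (1/p) * (n:ℝ) ^ (1 - 3/p) := by
    rw [Real.mul_rpow hK.le hT0.le, hT, ← Real.rpow_mul hn0.le, hexp]
  rw [hKT] at hfinal
  exact hfinal
end

section
/- For the radial eigenfunctions e_n(r) = √2 sin(nπr)/r on the unit ball of ℝ³ and any 1 ≤ p < 3, the L^p norms are uniformly bounded: ‖e_n‖_{L^p(Θ)} ≲ 1 with implicit constant depending only on p and not on n. -/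
open MeasureTheory

/-- `‖e_n‖_{L^p(Θ)} ≲ 1` uniformly in `n` for `1 ≤ p < 3`, where
`e_n(r) = √2 sin(nπr)/r` and the norm is taken against the radial measure `r² dr`. -/
theorem eigenfunction_Lp_bound_small_p (p : ℝ) (hp1 : 1 ≤ p) (hp3 : p < 3)
    (e : ℕ → ℝ → ℝ)
    (he : ∀ n r, e n r = Real.sqrt 2 * Real.sin (n * Real.pi * r) / r) :
    ∃ C > (0:ℝ), ∀ n : ℕ, 1 ≤ n →
      (∫ r in (0:ℝ)..1, |e n r| ^ p * r ^ 2) ^ (1 / p) ≤ C := by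
  have hp0 : (0:ℝ) < p := lt_of_lt_of_le one_pos hp1
  set K : ℝ := Real.sqrt 2 ^ p / (3 - p) with hK
  have hKpos : 0 < K := div_pos (Real.rpow_pos_of_pos (by positivity) p) (by linarith)
  refine ⟨K ^ (1/p), Real.rpow_pos_of_pos hKpos _, fun n hn => ?_⟩
  have hg : ∀ r ∈ Set.Ioc (0:ℝ) 1,
      |e n r| ^ p * r ^ 2 ≤ Real.sqrt 2 ^ p * r ^ (2 - p) := by
    intro r hr
    have hr0 : 0 < r := hr.1
    have h1 : |e n r| ≤ Real.sqrt 2 / r := by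
      rw [he]
      rw [abs_div, abs_of_pos hr0, abs_mul]
      rw [abs_of_nonneg (Real.sqrt_nonneg 2)]
      gcongr
      calc Real.sqrt 2 * |Real.sin (n * Real.pi * r)| ≤ Real.sqrt 2 * 1 :=
            mul_le_mul_of_nonneg_left (abs_le.mpr ⟨Real.neg_one_le_sin _, Real.sin_le_one _⟩) (Real.sqrt_nonneg 2)
        _ = Real.sqrt 2 := mul_one _
    have h2 : |e n r| ^ p ≤ (Real.sqrt 2 / r) ^ p :=
      Real.rpow_le_rpow (abs_nonneg _) h1 hp0.le
    have h3 : (Real.sqrt 2 / r) ^ p * r ^ 2 = Real.sqrt 2 ^ p * r ^ (2 - p) := by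
      rw [Real.div_rpow (Real.sqrt_nonneg 2) hr0.le, Real.rpow_sub hr0]
      rw [show ((2:ℝ)) = ((2:ℕ):ℝ) by norm_num, Real.rpow_natCast]
      field_simp
    calc |e n r| ^ p * r ^ 2 ≤ (Real.sqrt 2 / r) ^ p * r ^ 2 :=
          mul_le_mul_of_nonneg_right h2 (by positivity)
      _ = Real.sqrt 2 ^ p * r ^ (2 - p) := h3
  have hexp : (-1:ℝ) < 2 - p := by linarith
  have hgint : IntervalIntegrable (fun r => Real.sqrt 2 ^ p * r ^ (2 - p))
      volume 0 1 := (intervalIntegral.intervalIntegrable_rpow' hexp).const_mul _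
  have hmain : (∫ r in (0:ℝ)..1, |e n r| ^ p * r ^ 2) ≤ K := by
    have h1 : (∫ r in (0:ℝ)..1, |e n r| ^ p * r ^ 2)
        = ∫ r in Set.Ioc (0:ℝ) 1, |e n r| ^ p * r ^ 2 :=
      intervalIntegral.integral_of_le zero_le_one
    have h2 : (∫ r in (0:ℝ)..1, Real.sqrt 2 ^ p * r ^ (2 - p))
        = ∫ r in Set.Ioc (0:ℝ) 1, Real.sqrt 2 ^ p * r ^ (2 - p) :=
      intervalIntegral.integral_of_le zero_le_one
    have hval : (∫ r in (0:ℝ)..1, Real.sqrt 2 ^ p * r ^ (2 - p)) = K := by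
      rw [intervalIntegral.integral_const_mul, integral_rpow (Or.inl hexp)]
      rw [hK]
      rw [Real.one_rpow, Real.zero_rpow (by linarith : (2:ℝ) - p + 1 ≠ 0)]
      ring
    rw [h1, ← hval, h2]
    apply integral_mono_of_nonneg
    · filter_upwards with r using by positivity
    · exact hgint.1
    · filter_upwards [ae_restrict_mem measurableSet_Ioc] with r hr using hg r hr
  have hnn : 0 ≤ ∫ r in (0:ℝ)..1, |e n r| ^ p * r ^ 2 :=
    intervalIntegral.integral_nonneg zero_le_one (fun r _ => by positivity)
  exact Real.rpow_le_rpow hnn hmain (by positivity)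
end

section
/- Let m ≥ 2 and let n₁ ≥ n₂ ≥ … ≥ n_m be positive integers. Then ∫₀^∞ (1/s^{2m−2}) ∏_{j=2}^{m} sin²((n_j/n_m)·s) ds ≲ ∏_{j=2}^{m−1} (n_j/n_m)^{2 − 1/(m−1)}, with implicit constant depending only on m. -/
open MeasureTheory Set

lemma my_sin_sq_le_rpow {p : ℝ} (hp1 : 0 ≤ p) (hp2 : p ≤ 2) {x : ℝ} (hx : 0 < x) :
    Real.sin x ^ 2 ≤ x ^ p := by
  rcases le_or_gt x 1 with h1 | h1
  · calc Real.sin x ^ 2 ≤ x ^ 2 := Real.sin_sq_le_sq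
      _ = x ^ (2:ℝ) := by rw [← Real.rpow_natCast x 2]; norm_num
      _ ≤ x ^ p := Real.rpow_le_rpow_of_exponent_ge hx h1 hp2
  · calc Real.sin x ^ 2 ≤ 1 := Real.sin_sq_le_one x
      _ ≤ x ^ p := Real.one_le_rpow h1.le hp1

lemma my_integrable (e : ℝ) (he1 : e < -1) (he2 : (-1:ℝ) < e + 2) :
    IntegrableOn (fun s : ℝ => min 1 (s ^ 2) * s ^ e) (Ioi 0) := by
  have h01 : IntegrableOn (fun s : ℝ => min 1 (s ^ 2) * s ^ e) (Ioc 0 1) := by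
    have hbase : IntegrableOn (fun s : ℝ => s ^ (e + 2)) (Ioc 0 1) :=
      (intervalIntegral.intervalIntegrable_rpow' he2 (a := 0) (b := 1)).1
    refine hbase.congr_fun ?_ measurableSet_Ioc
    intro s hs
    have hs0 : (0:ℝ) < s := hs.1
    have hs1 : s ≤ 1 := hs.2
    have hmin : min 1 (s ^ 2) = s ^ 2 := min_eq_right (by nlinarith)
    show s ^ (e + 2) = min 1 (s ^ 2) * s ^ e
    rw [hmin, Real.rpow_add hs0, ← Real.rpow_natCast s 2]
    norm_num
    ring
  have h1i : IntegrableOn (fun s : ℝ => min 1 (s ^ 2) * s ^ e) (Ioi 1) := by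
    have hbase : IntegrableOn (fun s : ℝ => s ^ e) (Ioi 1) :=
      integrableOn_Ioi_rpow_of_lt he1 one_pos
    refine hbase.congr_fun ?_ measurableSet_Ioi
    intro s hs
    have hmin : min 1 (s ^ 2) = 1 := min_eq_left (by nlinarith [mem_Ioi.1 hs])
    show s ^ e = min 1 (s ^ 2) * s ^ e
    rw [hmin, one_mul]
  have := h01.union h1i
  rwa [Ioc_union_Ioi_eq_Ioi (zero_le_one)] at this

/-- For `m ≥ 2` and positive integers `n₁ ≥ n₂ ≥ ⋯ ≥ n_m`,
`∫₀^∞ s^{-(2m-2)} ∏_{j=2}^m sin²((n_j/n_m) s) ds ≲ ∏_{j=2}^{m-1} (n_j/n_m)^{2 - 1/(m-1)}`,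
with implicit constant depending only on `m`. -/
theorem sine_product_integral_bound (m : ℕ) (hm : 2 ≤ m) :
    ∃ C > (0:ℝ), ∀ n : ℕ → ℕ,
      (∀ j, 1 ≤ j → j ≤ m → 1 ≤ n j) →
      (∀ i j, 1 ≤ i → i ≤ j → j ≤ m → n j ≤ n i) →
      (∫ s in Set.Ioi (0:ℝ),
          (1 / s ^ (2 * m - 2)) *
            ∏ j ∈ Finset.Icc 2 m, Real.sin ((n j : ℝ) / (n m) * s) ^ 2)
        ≤ C * ∏ j ∈ Finset.Icc 2 (m - 1),
            ((n j : ℝ) / (n m)) ^ (2 - 1 / ((m : ℝ) - 1)) := by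
  obtain ⟨k, rfl⟩ : ∃ k, m = 2 + k := ⟨m - 2, by omega⟩
  set p : ℝ := 2 - 1 / (((2 + k : ℕ) : ℝ) - 1) with hp
  have hc : ((2 + k : ℕ) : ℝ) = (k : ℝ) + 2 := by push_cast; ring
  have hk0 : (0:ℝ) ≤ (k : ℝ) := Nat.cast_nonneg k
  have hkp : (0:ℝ) < (k : ℝ) + 1 := by linarith
  have hinvle : 1 / ((k:ℝ) + 1) ≤ 1 := by rw [div_le_one hkp]; linarith
  have hinvpos : 0 < 1 / ((k:ℝ) + 1) := by positivity
  have hpeq : p = 2 - 1 / ((k:ℝ) + 1) := by rw [hp, hc]; ring_nf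
  have hp0 : 0 ≤ p := by rw [hpeq]; linarith
  have hp2 : p ≤ 2 := by rw [hpeq]; linarith
  set e : ℝ := p * (k : ℝ) - (2 * (k : ℝ) + 2) with he
  have hpk : p * (k:ℝ) = 2 * (k:ℝ) - (k:ℝ) / ((k:ℝ) + 1) := by rw [hpeq]; ring
  have hdivnn : 0 ≤ (k:ℝ) / ((k:ℝ) + 1) := by positivity
  have hdivlt : (k:ℝ) / ((k:ℝ) + 1) < 1 := (div_lt_one hkp).2 (by linarith)
  have he1 : e < -1 := by rw [he, hpk]; linarith
  have he2 : (-1:ℝ) < e + 2 := by rw [he, hpk]; linarith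
  have hgint : IntegrableOn (fun s : ℝ => min 1 (s ^ 2) * s ^ e) (Ioi 0) :=
    my_integrable e he1 he2
  set I : ℝ := ∫ s in Ioi (0:ℝ), min 1 (s ^ 2) * s ^ e with hI
  have hInn : 0 ≤ I := by
    rw [hI]
    apply setIntegral_nonneg measurableSet_Ioi
    intro s hs
    have hs0 : (0:ℝ) < s := hs
    positivity
  refine ⟨I + 1, by linarith, ?_⟩
  intro n h1 h2
  have hnm1 : 1 ≤ n (2 + k) := h1 (2 + k) (by omega) le_rfl
  have hnm : (0:ℝ) < (n (2 + k) : ℝ) := by exact_mod_cast Nat.lt_of_lt_of_le Nat.zero_lt_one hnm1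
  set K : ℝ := ∏ j ∈ Finset.Icc 2 (2 + k - 1), ((n j : ℝ) / (n (2 + k))) ^ p with hK
  have hK0 : 0 ≤ K := Finset.prod_nonneg fun j _ => Real.rpow_nonneg (by positivity) p
  have key : ∀ s ∈ Ioi (0:ℝ),
      (1 / s ^ (2 * (2 + k) - 2)) *
          ∏ j ∈ Finset.Icc 2 (2 + k), Real.sin ((n j : ℝ) / (n (2 + k)) * s) ^ 2
        ≤ K * (min 1 (s ^ 2) * s ^ e) := by
    intro s hs
    have hs0 : (0:ℝ) < s := hs
    -- split off top factor
    have hidx : Finset.Icc 2 (2 + k) = Finset.Icc 2 (k + 1 + 1) := by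
      congr 1; omega
    have htop : k + 1 + 1 = 2 + k := by omega
    have hsplit : ∏ j ∈ Finset.Icc 2 (2 + k), Real.sin ((n j : ℝ) / (n (2 + k)) * s) ^ 2
        = (∏ j ∈ Finset.Icc 2 (k + 1), Real.sin ((n j : ℝ) / (n (2 + k)) * s) ^ 2) *
            Real.sin ((n (2 + k) : ℝ) / (n (2 + k)) * s) ^ 2 := by
      rw [hidx, Finset.prod_Icc_succ_top (by omega), htop]
    have hidx2 : Finset.Icc 2 (2 + k - 1) = Finset.Icc 2 (k + 1) := by congr 1; omega
    have hself : (n (2 + k) : ℝ) / (n (2 + k)) = 1 := div_self hnm.ne'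
    have hsin1 : Real.sin ((n (2 + k) : ℝ) / (n (2 + k)) * s) ^ 2 ≤ min 1 (s ^ 2) := by
      rw [hself, one_mul]
      exact le_min (Real.sin_sq_le_one s) Real.sin_sq_le_sq
    have hP1 : (∏ j ∈ Finset.Icc 2 (k + 1), Real.sin ((n j : ℝ) / (n (2 + k)) * s) ^ 2)
        ≤ K * s ^ (p * (k:ℝ)) := by
      have step1 : (∏ j ∈ Finset.Icc 2 (k + 1), Real.sin ((n j : ℝ) / (n (2 + k)) * s) ^ 2)
          ≤ ∏ j ∈ Finset.Icc 2 (k + 1), ((n j : ℝ) / (n (2 + k)) * s) ^ p := by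
        apply Finset.prod_le_prod (fun j _ => sq_nonneg _)
        intro j hj
        rw [Finset.mem_Icc] at hj
        have hnj : (0:ℝ) < (n j : ℝ) := by
          exact_mod_cast Nat.lt_of_lt_of_le Nat.zero_lt_one (h1 j (by omega) (by omega))
        exact my_sin_sq_le_rpow hp0 hp2 (mul_pos (div_pos hnj hnm) hs0)
      have step2 : ∏ j ∈ Finset.Icc 2 (k + 1), ((n j : ℝ) / (n (2 + k)) * s) ^ p
          = K * (s ^ p) ^ k := by
        rw [hK, hidx2]
        calc ∏ j ∈ Finset.Icc 2 (k + 1), ((n j : ℝ) / (n (2 + k)) * s) ^ p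
            = ∏ j ∈ Finset.Icc 2 (k + 1), (((n j : ℝ) / (n (2 + k))) ^ p * s ^ p) :=
              Finset.prod_congr rfl (fun j _ => Real.mul_rpow (by positivity) hs0.le)
          _ = (∏ j ∈ Finset.Icc 2 (k + 1), ((n j : ℝ) / (n (2 + k))) ^ p) *
                (s ^ p) ^ (Finset.Icc 2 (k + 1)).card := by
              rw [Finset.prod_mul_distrib, Finset.prod_const]
          _ = (∏ j ∈ Finset.Icc 2 (k + 1), ((n j : ℝ) / (n (2 + k))) ^ p) * (s ^ p) ^ k := by
              have hcard : k + 1 + 1 - 2 = k := by omega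
              rw [Nat.card_Icc, hcard]
      calc _ ≤ ∏ j ∈ Finset.Icc 2 (k + 1), ((n j : ℝ) / (n (2 + k)) * s) ^ p := step1
        _ = K * (s ^ p) ^ k := step2
        _ = K * s ^ (p * (k:ℝ)) := by
            rw [← Real.rpow_natCast (s ^ p) k, ← Real.rpow_mul hs0.le]
    have hpowred : 2 * (2 + k) - 2 = 2 * k + 2 := by omega
    have hspow : s ^ (2 * k + 2) = s ^ ((2:ℝ) * (k:ℝ) + 2) := by
      rw [← Real.rpow_natCast s (2 * k + 2)]
      push_cast
      ring_nf
    have hsne : s ^ ((2:ℝ) * (k:ℝ) + 2) ≠ 0 := (Real.rpow_pos_of_pos hs0 _).ne'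
    have hse : s ^ e = s ^ (p * (k:ℝ)) / s ^ ((2:ℝ) * (k:ℝ) + 2) := by
      rw [he, Real.rpow_sub hs0]
    calc (1 / s ^ (2 * (2 + k) - 2)) *
            ∏ j ∈ Finset.Icc 2 (2 + k), Real.sin ((n j : ℝ) / (n (2 + k)) * s) ^ 2
        ≤ (1 / s ^ (2 * (2 + k) - 2)) * ((K * s ^ (p * (k:ℝ))) * min 1 (s ^ 2)) := by
          apply mul_le_mul_of_nonneg_left _ (by positivity)
          rw [hsplit]
          exact mul_le_mul hP1 hsin1 (sq_nonneg _) (by positivity)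
      _ = K * (min 1 (s ^ 2) * s ^ e) := by
          rw [hpowred, hspow, hse]
          field_simp
  calc (∫ s in Ioi (0:ℝ),
          (1 / s ^ (2 * (2 + k) - 2)) *
            ∏ j ∈ Finset.Icc 2 (2 + k), Real.sin ((n j : ℝ) / (n (2 + k)) * s) ^ 2)
      ≤ ∫ s in Ioi (0:ℝ), K * (min 1 (s ^ 2) * s ^ e) := by
        apply integral_mono_of_nonneg
        · filter_upwards [ae_restrict_mem measurableSet_Ioi] with s hs
          have hs0 : (0:ℝ) < s := hs
          positivity
        · exact hgint.const_mul K
        · filter_upwards [ae_restrict_mem measurableSet_Ioi] with s hs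
          exact key s hs
    _ = K * I := by rw [hI]; exact integral_const_mul K _
    _ ≤ (I + 1) * K := by nlinarith
end

section
/- Let m ≥ 2 and n₁ ≥ n₂ ≥ … ≥ n_m be positive integers, and let e_n(r) = √2 sin(nπr)/r. Then the L² norm of the product of eigenfunctions satisfies ∫₀¹ ∏_{j=1}^{m} e_{n_j}(r)² · r² dr ≲ (n₂ n₃ ⋯ n_m)^{2 − 1/(m−1)}, with implicit constant depending only on m. -/
open MeasureTheory intervalIntegral

/-- For `m ≥ 2` and positive integers `n₁ ≥ n₂ ≥ ⋯ ≥ n_m`, with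
`e_n(r) = √2 sin(nπr)/r`, the L² norm of the product of eigenfunctions satisfies
`∫₀¹ ∏_{j=1}^m e_{n_j}(r)² r² dr ≲ (n₂ ⋯ n_m)^{2 - 1/(m-1)}`. -/
theorem eigenfunction_product_L2_bound (m : ℕ) (hm : 2 ≤ m) (e : ℕ → ℝ → ℝ)
    (he : ∀ k r, e k r = Real.sqrt 2 * Real.sin (k * Real.pi * r) / r) :
    ∃ C > (0:ℝ), ∀ n : ℕ → ℕ,
      (∀ j, 1 ≤ j → j ≤ m → 1 ≤ n j) →
      (∀ i j, 1 ≤ i → i ≤ j → j ≤ m → n j ≤ n i) →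
      (∫ r in (0:ℝ)..1, (∏ j ∈ Finset.Icc 1 m, e (n j) r ^ 2) * r ^ 2)
        ≤ C * (∏ j ∈ Finset.Icc 2 m, (n j : ℝ)) ^ (2 - 1 / ((m : ℝ) - 1)) := by
  have hπ : (0:ℝ) < Real.pi := Real.pi_pos
  have hmr : (2:ℝ) ≤ (m:ℝ) := by exact_mod_cast hm
  have hm1pos : (0:ℝ) < (m:ℝ) - 1 := by linarith
  set A : ℝ := 2 * (2 * Real.pi ^ 2) ^ (m - 1) with hAdef
  have hA0 : 0 < A := by positivity
  refine ⟨A + 2 ^ m, by positivity, ?_⟩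
  intro n hn _hmono
  set N : ℝ := ∏ j ∈ Finset.Icc 2 m, (n j : ℝ) with hNdef
  have hkey : ∀ j ∈ Finset.Icc 2 m, (1:ℝ) ≤ (n j : ℝ) := by
    intro j hj
    rw [Finset.mem_Icc] at hj
    have h1j : 1 ≤ n j := hn j (le_trans one_le_two hj.1) hj.2
    exact_mod_cast h1j
  have hN1 : 1 ≤ N := by
    rw [hNdef]
    calc (1:ℝ) = ∏ _j ∈ Finset.Icc 2 m, (1:ℝ) := by rw [Finset.prod_const, one_pow]
      _ ≤ ∏ j ∈ Finset.Icc 2 m, (n j : ℝ) :=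
        Finset.prod_le_prod (fun _ _ => by norm_num) hkey
  have hN0 : 0 < N := lt_of_lt_of_le one_pos hN1
  set α : ℝ := 2 - 1 / ((m:ℝ) - 1) with hαdef
  set r₀ : ℝ := N ^ (-(1 / ((m:ℝ) - 1))) with hr₀def
  have hr₀pos : 0 < r₀ := Real.rpow_pos_of_pos hN0 _
  have hr₀le1 : r₀ ≤ 1 := by
    apply Real.rpow_le_one_of_one_le_of_nonpos hN1
    have : 0 ≤ 1 / ((m:ℝ) - 1) := by positivity
    linarith
  set F : ℝ → ℝ := fun r =>
    (∏ j ∈ Finset.Icc 1 m, (Real.sqrt 2 * Real.sin ((n j : ℝ) * Real.pi * r) / r) ^ 2) * r ^ 2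
    with hFdef
  have hFeq : ∀ r, (∏ j ∈ Finset.Icc 1 m, e (n j) r ^ 2) * r ^ 2 = F r := by
    intro r; simp [hFdef, he]
  have hF0 : ∀ r, 0 ≤ F r := by
    intro r; exact mul_nonneg (Finset.prod_nonneg fun j _ => sq_nonneg _) (sq_nonneg _)
  have hFmeas : Measurable F := by
    apply Measurable.mul _ (by fun_prop)
    apply Finset.measurable_prod
    intro j _
    fun_prop
  have hsq : ∀ (k : ℕ) (r : ℝ),
      (Real.sqrt 2 * Real.sin ((k:ℝ) * Real.pi * r) / r) ^ 2
        = 2 * Real.sin ((k:ℝ) * Real.pi * r) ^ 2 / r ^ 2 := by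
    intro k r
    rw [div_pow, mul_pow, Real.sq_sqrt (by norm_num : (0:ℝ) ≤ 2)]
  -- claim 1 : F r ≤ A * N ^ 2 for r > 0
  have claim1 : ∀ r : ℝ, 0 < r → F r ≤ A * N ^ 2 := by
    intro r hr
    have hsplit : Finset.Icc 1 m = (Finset.Ioc 1 m).cons 1 Finset.left_notMem_Ioc :=
      Finset.Icc_eq_cons_Ioc (by omega)
    have hIoc : Finset.Ioc 1 m = Finset.Icc 2 m := (Finset.Icc_add_one_left_eq_Ioc 1 m).symm
    have hre : F r = ((Real.sqrt 2 * Real.sin ((n 1 : ℝ) * Real.pi * r) / r) ^ 2 * r ^ 2)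
        * ∏ j ∈ Finset.Icc 2 m, (Real.sqrt 2 * Real.sin ((n j : ℝ) * Real.pi * r) / r) ^ 2 := by
      simp only [hFdef, hsplit, Finset.prod_cons, hIoc]; ring
    have h1 : (Real.sqrt 2 * Real.sin ((n 1 : ℝ) * Real.pi * r) / r) ^ 2 * r ^ 2 ≤ 2 := by
      rw [hsq, div_mul_cancel₀ _ (by positivity : r ^ 2 ≠ 0)]
      nlinarith [Real.sin_sq_le_one ((n 1 : ℝ) * Real.pi * r)]
    have h2 : (∏ j ∈ Finset.Icc 2 m, (Real.sqrt 2 * Real.sin ((n j:ℝ) * Real.pi * r) / r) ^ 2)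
        ≤ (2 * Real.pi ^ 2) ^ (m - 1) * N ^ 2 := by
      have hb : ∀ j ∈ Finset.Icc 2 m,
          (Real.sqrt 2 * Real.sin ((n j:ℝ) * Real.pi * r) / r) ^ 2
            ≤ 2 * Real.pi ^ 2 * (n j : ℝ) ^ 2 := by
        intro j _
        rw [hsq]
        have hs : Real.sin ((n j:ℝ) * Real.pi * r) ^ 2 ≤ ((n j:ℝ) * Real.pi * r) ^ 2 :=
          Real.sin_sq_le_sq
        rw [div_le_iff₀ (by positivity : (0:ℝ) < r ^ 2)]
        nlinarith [sq_nonneg ((n j:ℝ) * Real.pi)]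
      calc (∏ j ∈ Finset.Icc 2 m, (Real.sqrt 2 * Real.sin ((n j:ℝ) * Real.pi * r) / r) ^ 2)
          ≤ ∏ j ∈ Finset.Icc 2 m, 2 * Real.pi ^ 2 * (n j : ℝ) ^ 2 :=
            Finset.prod_le_prod (fun j _ => sq_nonneg _) hb
        _ = (2 * Real.pi ^ 2) ^ ((Finset.Icc 2 m).card) * ∏ j ∈ Finset.Icc 2 m, (n j : ℝ) ^ 2 := by
            rw [Finset.prod_mul_distrib, Finset.prod_const]
        _ = (2 * Real.pi ^ 2) ^ (m - 1) * N ^ 2 := by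
            rw [Nat.card_Icc, Finset.prod_pow, ← hNdef,
              show m + 1 - 2 = m - 1 from by omega]
    calc F r ≤ 2 * ((2 * Real.pi ^ 2) ^ (m - 1) * N ^ 2) := by
          rw [hre]
          exact mul_le_mul h1 h2 (Finset.prod_nonneg fun j _ => sq_nonneg _) (by norm_num)
      _ = A * N ^ 2 := by rw [hAdef]; ring
  -- claim 2 : F r ≤ 2 ^ m * r ^ (2 - 2 * m) for r > 0
  have claim2 : ∀ r : ℝ, 0 < r → F r ≤ 2 ^ m * r ^ ((2:ℝ) - 2 * m) := by
    intro r hr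
    have hb : ∀ j ∈ Finset.Icc 1 m,
        (Real.sqrt 2 * Real.sin ((n j:ℝ) * Real.pi * r) / r) ^ 2 ≤ 2 / r ^ 2 := by
      intro j _
      rw [hsq, div_le_div_iff₀ (by positivity) (by positivity)]
      nlinarith [Real.sin_sq_le_one ((n j:ℝ) * Real.pi * r), sq_nonneg r]
    have hprod : (∏ j ∈ Finset.Icc 1 m, (Real.sqrt 2 * Real.sin ((n j:ℝ) * Real.pi * r) / r) ^ 2)
        ≤ (2 / r ^ 2) ^ m := by
      calc (∏ j ∈ Finset.Icc 1 m, (Real.sqrt 2 * Real.sin ((n j:ℝ) * Real.pi * r) / r) ^ 2)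
          ≤ ∏ _j ∈ Finset.Icc 1 m, 2 / r ^ 2 :=
            Finset.prod_le_prod (fun j _ => sq_nonneg _) hb
        _ = (2 / r ^ 2) ^ m := by simp [Finset.prod_const, Nat.card_Icc, div_pow]
    have hF : F r ≤ (2 / r ^ 2) ^ m * r ^ 2 :=
      mul_le_mul_of_nonneg_right hprod (sq_nonneg r)
    refine hF.trans (le_of_eq ?_)
    have hpow : r ^ ((2:ℝ) - 2 * m) = r ^ 2 / r ^ (2 * m) := by
      rw [Real.rpow_sub hr, Real.rpow_two]
      congr 1
      rw [show (2:ℝ) * m = ((2 * m : ℕ) : ℝ) by push_cast; ring, Real.rpow_natCast]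
    rw [hpow, div_pow, ← pow_mul]
    field_simp
  -- integrability
  have hIntF : ∀ a b : ℝ, 0 ≤ a → 0 ≤ b → IntervalIntegrable F volume a b := by
    intro a b ha hb
    apply IntervalIntegrable.mono_fun' (g := fun _ => A * N ^ 2) intervalIntegrable_const
      hFmeas.aestronglyMeasurable.restrict
    filter_upwards [ae_restrict_mem measurableSet_uIoc] with x hx
    rw [Real.norm_eq_abs, abs_of_nonneg (hF0 x)]
    rw [Set.mem_uIoc] at hx
    rcases hx with hx | hx
    · exact claim1 x (lt_of_le_of_lt ha hx.1)
    · exact claim1 x (lt_of_le_of_lt hb hx.1)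
  -- split the integral
  have hsplit : (∫ r in (0:ℝ)..1, F r)
      = (∫ r in (0:ℝ)..r₀, F r) + ∫ r in r₀..(1:ℝ), F r :=
    (intervalIntegral.integral_add_adjacent_intervals (hIntF 0 r₀ le_rfl hr₀pos.le)
      (hIntF r₀ 1 hr₀pos.le (by norm_num))).symm
  -- first piece
  have hI1 : (∫ r in (0:ℝ)..r₀, F r) ≤ A * N ^ 2 * r₀ := by
    have h : (∫ r in (0:ℝ)..r₀, F r) ≤ ∫ _r in (0:ℝ)..r₀, A * N ^ 2 := by
      apply intervalIntegral.integral_mono_on hr₀pos.le (hIntF 0 r₀ le_rfl hr₀pos.le)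
        intervalIntegrable_const
      intro x hx
      rcases eq_or_lt_of_le hx.1 with h0 | h0
      · have hF00 : F 0 = 0 := by simp [hFdef]
        rw [← h0, hF00]; positivity
      · exact claim1 x h0
    have h2 : (∫ _r in (0:ℝ)..r₀, A * N ^ 2) = A * N ^ 2 * r₀ := by
      rw [intervalIntegral.integral_const, smul_eq_mul, sub_zero]
      ring
    exact h.trans h2.le
  -- second piece
  have hy : ((2:ℝ) - 2 * m) ≠ -1 := by intro h; nlinarith
  have h0notin : (0:ℝ) ∉ Set.uIcc r₀ 1 := by
    rw [Set.uIcc_of_le hr₀le1]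
    intro h
    exact absurd h.1 (not_le.mpr hr₀pos)
  have hInt2 : IntervalIntegrable (fun r : ℝ => 2 ^ m * r ^ ((2:ℝ) - 2 * m)) volume r₀ 1 :=
    (intervalIntegrable_rpow (Or.inr h0notin)).const_mul _
  have hI2 : (∫ r in r₀..(1:ℝ), F r) ≤ 2 ^ m * r₀ ^ ((3:ℝ) - 2 * m) := by
    have step1 : (∫ r in r₀..(1:ℝ), F r)
        ≤ ∫ r in r₀..(1:ℝ), 2 ^ m * r ^ ((2:ℝ) - 2 * m) := by
      apply intervalIntegral.integral_mono_on hr₀le1 (hIntF r₀ 1 hr₀pos.le (by norm_num)) hInt2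
      intro x hx
      exact claim2 x (lt_of_lt_of_le hr₀pos hx.1)
    have step2 : (∫ r in r₀..(1:ℝ), 2 ^ m * r ^ ((2:ℝ) - 2 * m))
        = 2 ^ m * (((1:ℝ) - r₀ ^ ((3:ℝ) - 2 * m)) / ((2:ℝ) - 2 * m + 1)) := by
      rw [intervalIntegral.integral_const_mul, integral_rpow (Or.inr ⟨hy, h0notin⟩),
        Real.one_rpow, show (2:ℝ) - 2 * (m:ℝ) + 1 = 3 - 2 * (m:ℝ) from by ring]
    have hx0 : (0:ℝ) ≤ r₀ ^ ((3:ℝ) - 2 * m) := (Real.rpow_pos_of_pos hr₀pos _).le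
    have step3 : ((1:ℝ) - r₀ ^ ((3:ℝ) - 2 * m)) / ((2:ℝ) - 2 * m + 1)
        ≤ r₀ ^ ((3:ℝ) - 2 * m) := by
      rw [div_le_iff_of_neg (by nlinarith : (2:ℝ) - 2 * m + 1 < 0)]
      nlinarith
    calc (∫ r in r₀..(1:ℝ), F r) ≤ 2 ^ m * (((1:ℝ) - r₀ ^ ((3:ℝ) - 2 * m)) / ((2:ℝ) - 2 * m + 1)) :=
          step1.trans step2.le
      _ ≤ 2 ^ m * r₀ ^ ((3:ℝ) - 2 * m) := by
          apply mul_le_mul_of_nonneg_left step3 (by positivity)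
  -- rpow arithmetic
  have hr₀pow : r₀ ^ ((3:ℝ) - 2 * m) = N ^ α := by
    rw [hr₀def, ← Real.rpow_mul hN0.le]
    congr 1
    rw [hαdef]
    field_simp
    ring
  have hNr : N ^ 2 * r₀ = N ^ α := by
    rw [hr₀def, ← Real.rpow_natCast N 2, ← Real.rpow_add hN0]
    congr 1
  calc (∫ r in (0:ℝ)..1, (∏ j ∈ Finset.Icc 1 m, e (n j) r ^ 2) * r ^ 2)
      = ∫ r in (0:ℝ)..1, F r := intervalIntegral.integral_congr fun x _ => hFeq x
    _ = (∫ r in (0:ℝ)..r₀, F r) + ∫ r in r₀..(1:ℝ), F r := hsplit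
    _ ≤ A * N ^ 2 * r₀ + 2 ^ m * r₀ ^ ((3:ℝ) - 2 * m) := add_le_add hI1 hI2
    _ = A * N ^ α + 2 ^ m * N ^ α := by rw [hr₀pow, mul_assoc, hNr]
    _ = (A + 2 ^ m) * N ^ α := by ring
end
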